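/- Define D(z) = z^{α/2}/φ(z)^{α/2} for z ∈ ℂ \ [0,1], with φ(z) = 2(z-1/2)+2z^{1/2}(z-1)^{1/2} and principal branches, α > -1. Then D is holomorphic and non-vanishing on ℂ \ [0,1], its boundary values satisfy D₊(x)·D₋(x) = x^α for all x ∈ (0,1), and lim_{z→∞} D(z) = 2^{-α}. -/

import Mathlib

open Filter
open Complex Real

/-- The conformal map `φ(z) = 2(z - 1/2) + 2 z^{1/2}(z-1)^{1/2}` (principal branches). -/
noncomputable def phiMap (z : ℂ) : ℂ :=
  2 * (z - 1/2) + 2 * z ^ ((1:ℂ)/2) * (z - 1) ^ ((1:ℂ)/2)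

/-- The Szegő function `D(z) = z^{α/2}/φ(z)^{α/2}` of the weight `x^α` on `(0,1)`. -/
noncomputable def szego (α : ℝ) (z : ℂ) : ℂ :=
  z ^ ((α : ℂ)/2) / (phiMap z) ^ ((α : ℂ)/2)

/-- The segment `[0,1]` viewed as a subset of `ℂ`. -/
def unitSegment : Set ℂ := (fun x : ℝ => (x : ℂ)) '' Set.Icc 0 1

noncomputable def uAux (z : ℂ) : ℂ := 1 + (1 - 1/z) ^ ((1:ℂ)/2)

namespace SzegoAux



lemma slit_arg {w : ℂ} (hw : w ∈ slitPlane) : -π < arg w ∧ arg w < π := by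
  refine ⟨neg_pi_lt_arg w, lt_of_le_of_ne (arg_le_pi w) ?_⟩
  intro h
  rcases arg_eq_pi_iff.mp h with ⟨h1, h2⟩
  rcases mem_slitPlane_iff.mp hw with h | h
  · linarith
  · exact h h2

lemma sqrt_eq_exp {w : ℂ} (hw : w ≠ 0) : w ^ ((1:ℂ)/2) = exp (log w * (1/2)) :=
  cpow_def_of_ne_zero hw _

lemma log_half_im (w : ℂ) : (log w * (1/2)).im = arg w / 2 := by
  simp [Complex.mul_im, Complex.log_im]; ring

lemma log_sqrt {w : ℂ} (hw : w ∈ slitPlane) : log (w ^ ((1:ℂ)/2)) = log w * (1/2) := by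
  rw [sqrt_eq_exp (slitPlane_ne_zero hw), Complex.log_exp]
  · rw [log_half_im]; have := (slit_arg hw).1; linarith [Real.pi_pos]
  · rw [log_half_im]; have := (slit_arg hw).2; linarith [Real.pi_pos]

lemma arg_sqrt {w : ℂ} (hw : w ∈ slitPlane) : arg (w ^ ((1:ℂ)/2)) = arg w / 2 := by
  have := congrArg Complex.im (log_sqrt hw)
  rwa [Complex.log_im, log_half_im] at this

lemma re_sqrt_pos {w : ℂ} (hw : w ∈ slitPlane) : 0 < (w ^ ((1:ℂ)/2)).re := by
  rw [sqrt_eq_exp (slitPlane_ne_zero hw), Complex.exp_re, log_half_im]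
  have h1 := (slit_arg hw).1
  have h2 := (slit_arg hw).2
  have hc : 0 < Real.cos (arg w / 2) :=
    Real.cos_pos_of_mem_Ioo ⟨by linarith, by linarith⟩
  positivity

lemma im_sqrt_pos {w : ℂ} (hw : w ∈ slitPlane) (him : 0 < w.im) :
    0 < (w ^ ((1:ℂ)/2)).im := by
  rw [sqrt_eq_exp (slitPlane_ne_zero hw), Complex.exp_im, log_half_im]
  have h2 := (slit_arg hw).2
  have h0 : 0 < arg w := by
    rcases (arg_nonneg_iff.mpr him.le).lt_or_eq with h | h
    · exact h
    · have := (arg_eq_zero_iff.mp h.symm).2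
      linarith
  have hs : 0 < Real.sin (arg w / 2) :=
    Real.sin_pos_of_pos_of_lt_pi (by linarith) (by linarith [Real.pi_pos])
  positivity

lemma im_sqrt_neg {w : ℂ} (hw : w ∈ slitPlane) (him : w.im < 0) :
    (w ^ ((1:ℂ)/2)).im < 0 := by
  rw [sqrt_eq_exp (slitPlane_ne_zero hw), Complex.exp_im, log_half_im]
  have h1 := (slit_arg hw).1
  have h0 : arg w < 0 := arg_neg_iff.mpr him
  have hs : Real.sin (arg w / 2) < 0 := by
    have := Real.sin_pos_of_pos_of_lt_pi (x := -(arg w / 2)) (by linarith) (by linarith [Real.pi_pos])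
    rw [Real.sin_neg] at this; linarith
  have he : 0 < Real.exp ((log w * (1/2)).re) := Real.exp_pos _
  nlinarith

lemma im_sqrt_zero {w : ℂ} (hw : w ∈ slitPlane) (him : w.im = 0) :
    (w ^ ((1:ℂ)/2)).im = 0 := by
  rw [sqrt_eq_exp (slitPlane_ne_zero hw), Complex.exp_im, log_half_im]
  have hre : 0 < w.re := by
    rcases mem_slitPlane_iff.mp hw with h | h
    · exact h
    · exact absurd him h
  have : arg w = 0 := arg_eq_zero_iff.mpr ⟨hre.le, him⟩
  simp [this]

lemma sq_sqrt' {w : ℂ} (hw : w ≠ 0) : (w ^ ((1:ℂ)/2)) ^ 2 = w := by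
  rw [sq, ← Complex.cpow_add _ _ hw]
  norm_num

lemma im_pos_of_arg {x : ℂ} (h1 : 0 < arg x) (h2 : arg x < π) : 0 < x.im := by
  rcases lt_trichotomy x.im 0 with h | h | h
  · exact absurd (arg_neg_iff.mpr h) (by linarith)
  · rcases le_or_gt 0 x.re with hr | hr
    · exact absurd (arg_eq_zero_iff.mpr ⟨hr, h⟩) (by linarith)
    · exact absurd (arg_eq_pi_iff.mpr ⟨hr, h⟩) (by linarith)
  · exact h

lemma log_mul' {x y : ℂ} (hx : x ≠ 0) (hy : y ≠ 0) (h1 : -π < arg x + arg y)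
    (h2 : arg x + arg y ≤ π) : log (x * y) = log x + log y := by
  have : x * y = exp (log x + log y) := by rw [Complex.exp_add, exp_log hx, exp_log hy]
  rw [this, Complex.log_exp] <;>
    simp only [Complex.add_im, Complex.log_im] <;> assumption

lemma arg_mul' {x y : ℂ} (hx : x ≠ 0) (hy : y ≠ 0) (h1 : -π < arg x + arg y)
    (h2 : arg x + arg y ≤ π) : arg (x * y) = arg x + arg y := by
  have := congrArg Complex.im (log_mul' hx hy h1 h2)
  simpa [Complex.log_im] using this



lemma arg_Ioo_of_im_pos {x : ℂ} (h : 0 < x.im) : 0 < arg x ∧ arg x < π := by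
  constructor
  · rcases (arg_nonneg_iff.mpr h.le).lt_or_eq with h' | h'
    · exact h'
    · have := (arg_eq_zero_iff.mp h'.symm).2; linarith
  · rcases (arg_le_pi x).lt_or_eq with h' | h'
    · exact h'
    · have := (arg_eq_pi_iff.mp h').2; linarith

lemma arg_Ioo_of_im_neg {x : ℂ} (h : x.im < 0) : -π < arg x ∧ arg x < 0 :=
  ⟨neg_pi_lt_arg x, arg_neg_iff.mpr h⟩

lemma mem_unitSegment_iff {z : ℂ} :
    z ∈ unitSegment ↔ z.im = 0 ∧ 0 ≤ z.re ∧ z.re ≤ 1 := by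
  constructor
  · rintro ⟨x, hx, rfl⟩
    simpa using hx
  · rintro ⟨h0, h1, h2⟩
    exact ⟨z.re, ⟨h1, h2⟩, by simp [Complex.ext_iff, h0]⟩

lemma int_eq_zero {k : ℤ} (h1 : (-1:ℝ) < k) (h2 : (k:ℝ) < 1) : k = 0 := by
  have : |(k:ℝ)| < 1 := abs_lt.mpr ⟨by linarith, h2⟩
  rw [← Int.cast_abs] at this
  have h : |k| < 1 := by exact_mod_cast this
  rw [abs_lt] at h
  omega

lemma k_eq_zero {k : ℤ} {d : ℝ} (hk : d = 2*π*k) (h1 : -(2*π) < d) (h2 : d < 2*π) : k = 0 := by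
  have hpi := Real.pi_pos
  have h2pi : (0:ℝ) < 2*π := by linarith
  rw [hk] at h1 h2
  have hk1 : (-1:ℝ) < k := by
    have := (mul_lt_mul_iff_right₀ h2pi).mp (show 2*π*(-1:ℝ) < 2*π*k by linarith)
    linarith
  have hk2 : (k:ℝ) < 1 := by
    have := (mul_lt_mul_iff_right₀ h2pi).mp (show 2*π*(k:ℝ) < 2*π*1 by linarith)
    linarith
  exact int_eq_zero hk1 hk2

set_option maxHeartbeats 1000000 in
lemma key {z : ℂ} (hz : z ∈ unitSegmentᶜ) :
    (1 - 1/z) ∈ slitPlane ∧ 0 < (uAux z).re ∧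
    ∀ α : ℝ, szego α z = uAux z ^ (-(α:ℂ)) := by
  have hpi := Real.pi_pos
  have hzs : z ∉ unitSegment := hz
  have hz0 : z ≠ 0 := by
    rintro rfl; exact hzs (mem_unitSegment_iff.mpr (by norm_num))
  have hz1 : z ≠ 1 := by
    rintro rfl; exact hzs (mem_unitSegment_iff.mpr (by norm_num))
  have hz1' : z - 1 ≠ 0 := sub_ne_zero.mpr hz1
  set q : ℂ := 1 - 1/z with hq_def
  have hq_im : q.im = z.im / Complex.normSq z := by
    rw [hq_def]; simp [one_div, Complex.inv_im]; ring
  have hns : 0 < Complex.normSq z := Complex.normSq_pos.mpr hz0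
  have hq_re_pos : z.im = 0 → 0 < q.re := by
    intro him
    have hre0 : z.re ≠ 0 := by
      intro h; exact hz0 (Complex.ext h him)
    have hcase : z.re < 0 ∨ 1 < z.re := by
      by_contra hc
      push_neg at hc
      exact hzs (mem_unitSegment_iff.mpr ⟨him, hc.1, hc.2⟩)
    have hqre : q.re = 1 - 1/z.re := by
      rw [hq_def]; simp [one_div, Complex.inv_re, Complex.normSq_apply, him]
    rw [hqre]
    rcases hcase with h | h
    · have h2 : 1/z.re < 0 := one_div_neg.mpr h
      linarith
    · have h2 : 1/z.re < 1 := by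
        rw [div_lt_one (by linarith)]; linarith
      linarith
  have hq_slit : q ∈ slitPlane := by
    rcases eq_or_ne z.im 0 with him | him
    · exact mem_slitPlane_iff.mpr (Or.inl (hq_re_pos him))
    · refine mem_slitPlane_iff.mpr (Or.inr ?_)
      rw [hq_im]
      exact div_ne_zero him (ne_of_gt hns)
  have hq0 : q ≠ 0 := slitPlane_ne_zero hq_slit
  set sq : ℂ := q ^ ((1:ℂ)/2) with hsq_def
  have hsq_re : 0 < sq.re := re_sqrt_pos hq_slit
  have hsq0 : sq ≠ 0 := by
    intro h; rw [h] at hsq_re; simp at hsq_re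
  have hu_re : 0 < (1 + sq).re := by
    simp only [Complex.add_re, Complex.one_re]; linarith
  have hu0 : (1 + sq) ≠ 0 := by
    intro h; rw [h] at hu_re; simp at hu_re
  have hu_slit : (1 + sq) ∈ slitPlane := mem_slitPlane_iff.mpr (Or.inl hu_re)
  have hzq : z * q = z - 1 := by
    rw [hq_def]; field_simp
  have huAux : uAux z = 1 + sq := by rw [uAux]
  -- main case analysis
  have main : Complex.log (z * q) = Complex.log z + Complex.log q ∧
      (-π < arg z + 2 * arg (1 + sq) ∧ arg z + 2 * arg (1 + sq) ≤ π) := by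
    rcases lt_trichotomy z.im 0 with him | him | him
    · -- im z < 0
      have hqim : q.im < 0 := by rw [hq_im]; exact div_neg_of_neg_of_pos him hns
      have haz := arg_Ioo_of_im_neg him
      have haz1 := arg_Ioo_of_im_neg (show (z-1).im < 0 by simp [Complex.sub_im, him])
      have hargq : arg q = arg (z-1) - arg z := by
        have hinv : arg z⁻¹ = -arg z := by
          rw [Complex.arg_inv, if_neg]
          intro h; have := (arg_eq_pi_iff.mp h).2; linarith
        have hq_eq : q = (z-1) * z⁻¹ := by
          rw [hq_def]; field_simp
        rw [hq_eq, arg_mul' hz1' (inv_ne_zero hz0) (by rw [hinv]; linarith [haz.1, haz.2, haz1.1, haz1.2]) (by rw [hinv]; linarith [haz.1, haz.2, haz1.1, haz1.2]), hinv]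
        ring
      have hargsq : arg sq = (arg (z-1) - arg z) / 2 := by
        rw [hsq_def, arg_sqrt hq_slit, hargq]
      have hzsq_im : (z * sq).im < 0 := by
        have h1 : arg (z * sq) = arg z + arg sq :=
          arg_mul' hz0 hsq0 (by rw [hargsq]; linarith [haz.1, haz.2, haz1.1, haz1.2]) (by rw [hargsq]; linarith [haz.1, haz.2, haz1.1, haz1.2])
        refine arg_neg_iff.mp ?_
        rw [h1, hargsq]; linarith [haz.1, haz.2, haz1.1, haz1.2]
      have hsq2 : sq ^ 2 = q := by rw [hsq_def]; exact sq_sqrt' hq0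
      have hw_eq : z * (1 + sq)^2 = 2*z - 1 + 2*(z*sq) := by
        linear_combination z * hsq2 + hzq
      have hw_im : (z * (1 + sq)^2).im < 0 := by
        rw [hw_eq]
        have h2 : (2*z - 1 + 2*(z*sq)).im = 2*z.im + 2*(z*sq).im := by simp
        rw [h2]; linarith
      have hargw := arg_Ioo_of_im_neg hw_im
      have hu_im : (1 + sq).im < 0 := by
        simp only [Complex.add_im, Complex.one_im, zero_add]
        exact im_sqrt_neg hq_slit hqim
      have hargu1 := arg_Ioo_of_im_neg hu_im
      have hargu2 : -(π/2) < arg (1 + sq) := by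
        have := abs_arg_lt_pi_div_two_iff.mpr (Or.inl hu_re)
        have := abs_lt.mp this
        linarith [this.1]
      -- angle argument
      have hang : (arg (z * (1 + sq)^2) : Real.Angle) = ((arg z + arg (1+sq) + arg (1+sq) : ℝ) : Real.Angle) := by
        have h3 : z * (1 + sq)^2 = z * ((1+sq) * (1+sq)) := by ring
        rw [h3, arg_mul_coe_angle hz0 (mul_ne_zero hu0 hu0), arg_mul_coe_angle hu0 hu0,
          Real.Angle.coe_add, Real.Angle.coe_add, add_assoc]
      obtain ⟨k, hk⟩ := Real.Angle.angle_eq_iff_two_pi_dvd_sub.mp hang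
      have hk0 : k = 0 :=
        k_eq_zero hk (by linarith [hargw.1, hargw.2, haz.1, haz.2, hargu1.1, hargu1.2, hargu2])
          (by linarith [hargw.1, hargw.2, haz.1, haz.2, hargu1.1, hargu1.2, hargu2])
      rw [hk0] at hk
      simp at hk
      -- hk : arg w - (arg z + arg u + arg u) = 0
      have hsum : arg z + 2 * arg (1+sq) = arg (z * (1 + sq)^2) := by linarith
      refine ⟨?_, by rw [hsum]; linarith [hargw.2], by rw [hsum]; linarith [hargw.1]⟩
      · -- log(z*q) = log z + log q
        refine log_mul' hz0 hq0 ?_ ?_ <;> rw [hargq] <;>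
          linarith [haz1.1, haz1.2]
    · -- im z = 0
      have hqre := hq_re_pos him
      have hqim0 : q.im = 0 := by rw [hq_im, him]; simp
      have hargq0 : arg q = 0 := arg_eq_zero_iff.mpr ⟨hqre.le, hqim0⟩
      have hu_im : (1 + sq).im = 0 := by
        simp only [Complex.add_im, Complex.one_im, zero_add, hsq_def]
        exact im_sqrt_zero hq_slit hqim0
      have hargu : arg (1 + sq) = 0 := arg_eq_zero_iff.mpr ⟨hu_re.le, hu_im⟩
      refine ⟨log_mul' hz0 hq0 (by rw [hargq0]; simpa using neg_pi_lt_arg z) (by rw [hargq0]; simpa using arg_le_pi z), ?_, ?_⟩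
      · rw [hargu]; simpa using neg_pi_lt_arg z
      · rw [hargu]; simpa using arg_le_pi z
    · -- im z > 0
      have hqim : 0 < q.im := by rw [hq_im]; exact div_pos him hns
      have haz := arg_Ioo_of_im_pos him
      have haz1 := arg_Ioo_of_im_pos (show 0 < (z-1).im by simp [Complex.sub_im, him])
      have hargq : arg q = arg (z-1) - arg z := by
        have hinv : arg z⁻¹ = -arg z := by
          rw [Complex.arg_inv, if_neg]
          intro h; have := (arg_eq_pi_iff.mp h).2; linarith
        have hq_eq : q = (z-1) * z⁻¹ := by
          rw [hq_def]; field_simp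
        rw [hq_eq, arg_mul' hz1' (inv_ne_zero hz0) (by rw [hinv]; linarith [haz.1, haz.2, haz1.1, haz1.2]) (by rw [hinv]; linarith [haz.1, haz.2, haz1.1, haz1.2]), hinv]
        ring
      have hargsq : arg sq = (arg (z-1) - arg z) / 2 := by
        rw [hsq_def, arg_sqrt hq_slit, hargq]
      have hzsq_im : 0 < (z * sq).im := by
        have h1 : arg (z * sq) = arg z + arg sq :=
          arg_mul' hz0 hsq0 (by rw [hargsq]; linarith [haz.1, haz.2, haz1.1, haz1.2]) (by rw [hargsq]; linarith [haz.1, haz.2, haz1.1, haz1.2])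
        refine im_pos_of_arg ?_ ?_ <;> rw [h1, hargsq] <;> linarith [haz.1, haz.2, haz1.1, haz1.2]
      have hsq2 : sq ^ 2 = q := by rw [hsq_def]; exact sq_sqrt' hq0
      have hw_eq : z * (1 + sq)^2 = 2*z - 1 + 2*(z*sq) := by
        linear_combination z * hsq2 + hzq
      have hw_im : 0 < (z * (1 + sq)^2).im := by
        rw [hw_eq]
        have h2 : (2*z - 1 + 2*(z*sq)).im = 2*z.im + 2*(z*sq).im := by simp
        rw [h2]; linarith
      have hargw := arg_Ioo_of_im_pos hw_im
      have hu_im : 0 < (1 + sq).im := by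
        simp only [Complex.add_im, Complex.one_im, zero_add, hsq_def]
        exact im_sqrt_pos hq_slit hqim
      have hargu1 := arg_Ioo_of_im_pos hu_im
      have hargu2 : arg (1 + sq) < π/2 := by
        have := abs_arg_lt_pi_div_two_iff.mpr (Or.inl hu_re)
        have := abs_lt.mp this
        linarith [this.2]
      have hang : (arg (z * (1 + sq)^2) : Real.Angle) = ((arg z + arg (1+sq) + arg (1+sq) : ℝ) : Real.Angle) := by
        have h3 : z * (1 + sq)^2 = z * ((1+sq) * (1+sq)) := by ring
        rw [h3, arg_mul_coe_angle hz0 (mul_ne_zero hu0 hu0), arg_mul_coe_angle hu0 hu0,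
          Real.Angle.coe_add, Real.Angle.coe_add, add_assoc]
      obtain ⟨k, hk⟩ := Real.Angle.angle_eq_iff_two_pi_dvd_sub.mp hang
      have hk0 : k = 0 :=
        k_eq_zero hk (by linarith [hargw.1, hargw.2, haz.1, haz.2, hargu1.1, hargu1.2, hargu2])
          (by linarith [hargw.1, hargw.2, haz.1, haz.2, hargu1.1, hargu1.2, hargu2])
      rw [hk0] at hk
      simp at hk
      have hsum : arg z + 2 * arg (1+sq) = arg (z * (1 + sq)^2) := by linarith
      refine ⟨?_, by rw [hsum]; linarith [hargw.1], by rw [hsum]; linarith [hargw.2]⟩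
      · refine log_mul' hz0 hq0 ?_ ?_ <;> rw [hargq] <;>
          linarith [haz1.1, haz1.2]
  -- product identity for sqrt
  have hq_log : Complex.log q = Complex.log (z-1) - Complex.log z := by
    have h := main.1
    rw [hzq] at h
    rw [h]; ring
  have hsid : z ^ ((1:ℂ)/2) * (z-1) ^ ((1:ℂ)/2) = z * sq := by
    rw [sqrt_eq_exp hz0, sqrt_eq_exp hz1', hsq_def, sqrt_eq_exp hq0, ← Complex.exp_add]
    conv_rhs => rw [← Complex.exp_log hz0, ← Complex.exp_add]
    congr 1
    rw [hq_log]; ring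
  have hsq2 : sq ^ 2 = q := by rw [hsq_def]; exact sq_sqrt' hq0
  have hw_eq2 : z * (1 + sq)^2 = 2*z - 1 + 2*(z*sq) := by
    linear_combination z * hsq2 + hzq
  have hphi : phiMap z = z * (1 + sq)^2 := by
    simp only [phiMap]
    rw [hw_eq2]
    linear_combination 2 * hsid
  have hphi0 : z * (1 + sq)^2 ≠ 0 := mul_ne_zero hz0 (pow_ne_zero 2 hu0)
  have hlogw : Complex.log (z * (1 + sq)^2) = Complex.log z + 2 * Complex.log (1 + sq) := by
    have he : z * (1 + sq)^2 = exp (Complex.log z + 2 * Complex.log (1 + sq)) := by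
      rw [two_mul, Complex.exp_add, Complex.exp_add, exp_log hz0, exp_log hu0]; ring
    rw [he, Complex.log_exp]
    · have h : (Complex.log z + 2 * Complex.log (1 + sq)).im = arg z + 2 * arg (1 + sq) := by
        simp [Complex.log_im]
      rw [h]; exact main.2.1
    · have h : (Complex.log z + 2 * Complex.log (1 + sq)).im = arg z + 2 * arg (1 + sq) := by
        simp [Complex.log_im]
      rw [h]; exact main.2.2
  refine ⟨hq_slit, by rw [huAux]; exact hu_re, fun α => ?_⟩
  simp only [szego]
  rw [hphi, huAux]
  rw [Complex.cpow_def_of_ne_zero hz0, Complex.cpow_def_of_ne_zero hphi0,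
    Complex.cpow_def_of_ne_zero hu0, ← Complex.exp_sub, hlogw]
  congr 1
  ring



lemma notMem_of_im_ne {z : ℂ} (h : z.im ≠ 0) : z ∈ unitSegmentᶜ := by
  intro hmem
  exact h (mem_unitSegment_iff.mp hmem).1

lemma notMem_of_abs_gt {z : ℂ} (h : 1 < ‖z‖) : z ∈ unitSegmentᶜ := by
  intro hmem
  rcases hmem with ⟨s, hs, rfl⟩
  rw [Complex.norm_real, Real.norm_eq_abs] at h
  rcases hs with ⟨h1, h2⟩
  rw [_root_.abs_of_nonneg h1] at h
  linarith

-- Part 1: differentiability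
theorem part1 (α : ℝ) : DifferentiableOn ℂ (szego α) unitSegmentᶜ := by
  intro z hz
  obtain ⟨hslit, hure, hform⟩ := key hz
  have hz0 : z ≠ 0 := by
    rintro rfl
    exact hz (mem_unitSegment_iff.mpr (by norm_num))
  have hq_diff : DifferentiableAt ℂ (fun w : ℂ => 1 - 1/w) z :=
    (differentiableAt_const _).sub ((differentiableAt_const _).div differentiableAt_id hz0)
  have hu_diff : DifferentiableAt ℂ uAux z :=
    (differentiableAt_const (1:ℂ)).add (hq_diff.cpow (differentiableAt_const _) hslit)
  have hslitu : uAux z ∈ slitPlane := mem_slitPlane_iff.mpr (Or.inl hure)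
  have hg : DifferentiableAt ℂ (fun w => uAux w ^ (-(α:ℂ))) z :=
    hu_diff.cpow (differentiableAt_const _) hslitu
  exact hg.differentiableWithinAt.congr (fun w hw => (key hw).2.2 α) (hform α)

-- Part 2: nonvanishing
theorem part2 (α : ℝ) : ∀ z ∈ unitSegmentᶜ, szego α z ≠ 0 := by
  intro z hz
  obtain ⟨hslit, hure, hform⟩ := key hz
  have hu0 : uAux z ≠ 0 := by
    intro h; rw [h] at hure; simp at hure
  rw [hform α]
  simp [Complex.cpow_eq_zero_iff, hu0]

-- Part 4: limit at infinity
theorem part4 (α : ℝ) :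
    Tendsto (szego α) (comap (fun z : ℂ => ‖z‖) atTop) (nhds ((2 : ℂ) ^ (-α : ℂ))) := by
  have hinv : Tendsto (fun z : ℂ => 1/z) (comap (fun z : ℂ => ‖z‖) atTop) (nhds 0) := by
    rw [tendsto_zero_iff_norm_tendsto_zero]
    have heq : (fun z : ℂ => ‖1/z‖) = fun z : ℂ => ‖z‖⁻¹ := by
      funext z; simp
    rw [heq]
    exact tendsto_inv_atTop_zero.comp tendsto_comap
  have hq : Tendsto (fun z : ℂ => 1 - 1/z) (comap (fun z : ℂ => ‖z‖) atTop) (nhds 1) := by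
    have := (tendsto_const_nhds (x := (1:ℂ)) (f := comap (fun z : ℂ => ‖z‖) atTop)).sub hinv
    simpa using this
  have hsq : Tendsto (fun z : ℂ => (1 - 1/z) ^ ((1:ℂ)/2)) (comap (fun z : ℂ => ‖z‖) atTop)
      (nhds 1) := by
    have hc : ContinuousAt (fun w : ℂ => w ^ ((1:ℂ)/2)) 1 :=
      continuousAt_cpow_const (by simp [mem_slitPlane_iff])
    have := hc.tendsto.comp hq
    simpa [Function.comp_def] using this
  have hu : Tendsto uAux (comap (fun z : ℂ => ‖z‖) atTop) (nhds 2) := by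
    have h := (tendsto_const_nhds (x := (1:ℂ)) (f := comap (fun z : ℂ => ‖z‖) atTop)).add hsq
    have h2 : (1:ℂ) + 1 = 2 := by norm_num
    rw [h2] at h
    exact h
  have hfin : Tendsto (fun z => uAux z ^ (-(α:ℂ))) (comap (fun z : ℂ => ‖z‖) atTop)
      (nhds ((2:ℂ) ^ (-(α:ℂ)))) := by
    have hc : ContinuousAt (fun w : ℂ => w ^ (-(α:ℂ))) 2 :=
      continuousAt_cpow_const (by norm_num [mem_slitPlane_iff])
    exact hc.tendsto.comp hu
  have hev : ∀ᶠ z in comap (fun z : ℂ => ‖z‖) atTop, uAux z ^ (-(α:ℂ)) = szego α z := by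
    have hmem : {z : ℂ | 1 < ‖z‖} ∈ comap (fun z : ℂ => ‖z‖) atTop :=
      preimage_mem_comap (Ioi_mem_atTop 1)
    filter_upwards [hmem] with z hz
    exact ((key (notMem_of_abs_gt hz)).2.2 α).symm
  have h := hfin.congr' hev
  have hcast : ((2:ℂ) ^ (-α : ℂ)) = (2:ℂ) ^ (-(α:ℂ)) := by norm_cast
  rw [hcast]
  exact h



lemma im_one_sub_inv (w : ℂ) : (1 - 1/w).im = w.im / Complex.normSq w := by
  simp [one_div, Complex.inv_im]
  ring

/-- The boundary limit of `uAux` from one side. -/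
lemma uAux_tendsto (x : ℝ) (hx : x ∈ Set.Ioo (0:ℝ) 1) (σ : ℝ) (hσ : σ = 1 ∨ σ = -1) :
    Tendsto (fun ε : ℝ => uAux ((x : ℂ) + (σ * ε) * Complex.I)) (nhdsWithin 0 (Set.Ioi 0))
      (nhds (1 + σ * Real.sqrt (1/x - 1) * Complex.I)) := by
  obtain ⟨hx0, hx1⟩ := hx
  have h1x : 1 < 1/x := by rw [lt_div_iff₀ hx0]; linarith
  have hr : 0 < 1/x - 1 := by linarith
  set r : ℝ := 1/x - 1 with hr_def
  set q₀ : ℂ := ((1 - 1/x : ℝ) : ℂ) with hq0_def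
  have hq0re : q₀.re < 0 := by
    rw [hq0_def, Complex.ofReal_re]; linarith [h1x]
  have hq0im : q₀.im = 0 := by rw [hq0_def, Complex.ofReal_im]
  have habs : ‖q₀‖ = r := by
    rw [hq0_def, Complex.norm_real, Real.norm_eq_abs, abs_of_neg (by linarith : (1 - 1/x : ℝ) < 0)]
    ring
  set f : ℝ → ℂ := fun ε => (x : ℂ) + (σ * ε) * Complex.I with hf_def
  have hfim : ∀ ε : ℝ, (f ε).im = σ * ε := by
    intro ε; simp [hf_def]
  have hfne : ∀ ε : ℝ, 0 < ε → f ε ≠ 0 := by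
    intro ε hε h0
    have := hfim ε
    rw [h0] at this
    simp at this
    rcases hσ with h | h <;> rw [h] at this <;> simp at this <;> linarith
  have hqim : ∀ ε : ℝ, 0 < ε → (1 - 1/f ε).im = σ * ε / Complex.normSq (f ε) := by
    intro ε hε; rw [im_one_sub_inv, hfim]
  -- tendsto of q to q₀ in ℂ
  have hq_tendsto : Tendsto (fun ε : ℝ => 1 - 1/f ε) (nhdsWithin 0 (Set.Ioi 0)) (nhds q₀) := by
    have hxne : (x : ℂ) ≠ 0 := by
      simp only [ne_eq, Complex.ofReal_eq_zero]; linarith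
    have hf_cont : Tendsto f (nhdsWithin 0 (Set.Ioi 0)) (nhds (x : ℂ)) := by
      have : ContinuousAt f 0 := by
        apply ContinuousAt.add continuousAt_const
        exact (continuousAt_const.mul (Complex.continuous_ofReal.continuousAt)).mul continuousAt_const
      have h2 := this.tendsto.mono_left (nhdsWithin_le_nhds (s := Set.Ioi (0:ℝ)))
      simpa [hf_def] using h2
    have hcont : ContinuousAt (fun w : ℂ => 1 - 1/w) (x : ℂ) :=
      continuousAt_const.sub (continuousAt_const.div continuousAt_id hxne)
    have h3 := hcont.tendsto.comp hf_cont
    have h4 : (1 : ℂ) - 1/(x:ℂ) = q₀ := by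
      rw [hq0_def]
      push_cast
      ring
    rw [h4] at h3
    exact h3
  -- log tendsto
  have hlog : Tendsto (fun ε : ℝ => Complex.log (1 - 1/f ε)) (nhdsWithin 0 (Set.Ioi 0))
      (nhds (↑(Real.log r) + σ * π * Complex.I)) := by
    rcases hσ with h | h
    · -- from above
      have hbase := Complex.tendsto_log_nhdsWithin_im_nonneg_of_re_neg_of_im_zero hq0re hq0im
      have hq_in : Tendsto (fun ε : ℝ => 1 - 1/f ε) (nhdsWithin 0 (Set.Ioi 0))
          (nhdsWithin q₀ {w : ℂ | 0 ≤ w.im}) := by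
        rw [tendsto_nhdsWithin_iff]
        refine ⟨hq_tendsto, ?_⟩
        filter_upwards [eventually_mem_nhdsWithin] with ε hε
        have hh := hqim ε hε
        have hns : 0 < Complex.normSq (f ε) := Complex.normSq_pos.mpr (hfne ε hε)
        have hεp : (0:ℝ) < ε := hε
        show 0 ≤ (1 - 1/f ε).im
        rw [hh, h]
        apply div_nonneg _ hns.le
        linarith
      have := hbase.comp hq_in
      rw [habs] at this
      convert this using 2
      · rfl
      rw [h]
      push_cast
      ring
    · -- from below
      have hbase := Complex.tendsto_log_nhdsWithin_im_neg_of_re_neg_of_im_zero hq0re hq0im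
      have hq_in : Tendsto (fun ε : ℝ => 1 - 1/f ε) (nhdsWithin 0 (Set.Ioi 0))
          (nhdsWithin q₀ {w : ℂ | w.im < 0}) := by
        rw [tendsto_nhdsWithin_iff]
        refine ⟨hq_tendsto, ?_⟩
        filter_upwards [eventually_mem_nhdsWithin] with ε hε
        have hns : 0 < Complex.normSq (f ε) := Complex.normSq_pos.mpr (hfne ε hε)
        have hh := hqim ε hε
        have hεp : (0:ℝ) < ε := hε
        show (1 - 1/f ε).im < 0
        rw [hh, h]
        apply div_neg_of_neg_of_pos _ hns
        linarith
      have := hbase.comp hq_in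
      rw [habs] at this
      convert this using 2
      · rfl
      rw [h]
      push_cast
      ring
  -- sqrt tendsto
  have hval : Complex.exp ((↑(Real.log r) + σ * π * Complex.I) * (1/2))
      = σ * Real.sqrt r * Complex.I := by
    have hsplit : (↑(Real.log r) + σ * π * Complex.I) * (1/2)
        = ↑(Real.log r / 2) + (↑(σ * (π/2)) : ℂ) * Complex.I := by
      push_cast; ring
    rw [hsplit, Complex.exp_add, ← Complex.ofReal_exp]
    have hexp : Real.exp (Real.log r / 2) = Real.sqrt r := by
      rw [← Real.log_sqrt hr.le]
      exact Real.exp_log (Real.sqrt_pos.mpr hr)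
    rw [hexp, Complex.exp_mul_I]
    rcases hσ with h | h <;> rw [h] <;> push_cast <;> simp [Complex.cos_pi_div_two, Complex.sin_pi_div_two] <;> ring
  have hsq : Tendsto (fun ε : ℝ => (1 - 1/f ε) ^ ((1:ℂ)/2)) (nhdsWithin 0 (Set.Ioi 0))
      (nhds ((σ : ℂ) * Real.sqrt r * Complex.I)) := by
    have hcont : Continuous (fun ζ : ℂ => Complex.exp (ζ * (1/2))) :=
      Complex.continuous_exp.comp (continuous_mul_right _)
    have h1 := (hcont.continuousAt.tendsto.comp hlog)
    rw [hval] at h1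
    apply h1.congr'
    filter_upwards [eventually_mem_nhdsWithin] with ε hε
    have hne : (1 - 1/f ε) ≠ 0 := by
      intro h0
      have h2 := hqim ε hε
      rw [h0] at h2
      simp only [Complex.zero_im] at h2
      have hns : 0 < Complex.normSq (f ε) := Complex.normSq_pos.mpr (hfne ε hε)
      have hεp : (0:ℝ) < ε := hε
      have hne2 : σ * ε / Complex.normSq (f ε) ≠ 0 := by
        apply div_ne_zero _ (ne_of_gt hns)
        rcases hσ with h | h <;> rw [h] <;> nlinarith
      exact hne2 h2.symm
    rw [Complex.cpow_def_of_ne_zero hne]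
    rfl
  -- conclude
  have := (tendsto_const_nhds (x := (1:ℂ)) (f := nhdsWithin (0:ℝ) (Set.Ioi 0))).add hsq
  exact this


theorem part3 (α : ℝ) (x : ℝ) (hx : x ∈ Set.Ioo (0:ℝ) 1) : ∃ Dp Dm : ℂ,
    Tendsto (fun ε : ℝ => szego α ((x : ℂ) + ε * Complex.I))
      (nhdsWithin 0 (Set.Ioi 0)) (nhds Dp) ∧
    Tendsto (fun ε : ℝ => szego α ((x : ℂ) - ε * Complex.I))
      (nhdsWithin 0 (Set.Ioi 0)) (nhds Dm) ∧
    Dp * Dm = (x : ℂ) ^ (α : ℂ) := by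
  obtain ⟨hx0, hx1⟩ := hx
  have h1x : 1 < 1/x := by rw [lt_div_iff₀ hx0]; linarith
  set t : ℝ := Real.sqrt (1/x - 1) with ht_def
  have ht : 0 < t := Real.sqrt_pos.mpr (by linarith)
  have main : ∀ σ : ℝ, σ = 1 ∨ σ = -1 →
      Tendsto (fun ε : ℝ => szego α ((x : ℂ) + (σ * ε) * Complex.I))
        (nhdsWithin 0 (Set.Ioi 0))
        (nhds ((1 + (σ:ℂ) * (t:ℂ) * Complex.I) ^ (-(α:ℂ)))) := by
    intro σ hσ
    have hL := uAux_tendsto x ⟨hx0, hx1⟩ σ hσ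
    have hre : (1 + (σ:ℂ) * (t:ℂ) * Complex.I).re = 1 := by simp
    have hslit : (1 + (σ:ℂ) * (t:ℂ) * Complex.I) ∈ slitPlane :=
      mem_slitPlane_iff.mpr (Or.inl (by rw [hre]; norm_num))
    have h2 := (continuousAt_cpow_const (b := -(α:ℂ)) hslit).tendsto.comp hL
    apply h2.congr'
    filter_upwards [eventually_mem_nhdsWithin] with ε hε
    have hεp : (0:ℝ) < ε := hε
    have him : ((x:ℂ) + ((σ:ℂ) * (ε:ℂ)) * Complex.I).im ≠ 0 := by
      simp only [Complex.add_im, Complex.ofReal_im, Complex.mul_im, Complex.I_im,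
        Complex.I_re, Complex.ofReal_re, mul_zero, mul_one, zero_add]
      rcases hσ with h | h <;> rw [h] <;> simp <;> linarith
    exact ((key (notMem_of_im_ne him)).2.2 α).symm
  have hmp := main 1 (Or.inl rfl)
  have hmm := main (-1) (Or.inr rfl)
  have hDp : Tendsto (fun ε : ℝ => szego α ((x : ℂ) + ε * Complex.I))
      (nhdsWithin 0 (Set.Ioi 0)) (nhds ((1 + (t:ℂ) * Complex.I) ^ (-(α:ℂ)))) := by
    have heq : ∀ ε : ℝ, szego α ((x : ℂ) + (((1:ℝ):ℂ) * ε) * Complex.I)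
        = szego α ((x : ℂ) + ε * Complex.I) := by
      intro ε; norm_num
    have := hmp.congr heq
    have hval : (1 + (((1:ℝ)):ℂ) * (t:ℂ) * Complex.I) = 1 + (t:ℂ) * Complex.I := by
      norm_num
    rwa [hval] at this
  have hDm : Tendsto (fun ε : ℝ => szego α ((x : ℂ) - ε * Complex.I))
      (nhdsWithin 0 (Set.Ioi 0)) (nhds ((1 - (t:ℂ) * Complex.I) ^ (-(α:ℂ)))) := by
    have heq : ∀ ε : ℝ, szego α ((x : ℂ) + ((((-1):ℝ):ℂ) * ε) * Complex.I)
        = szego α ((x : ℂ) - ε * Complex.I) := by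
      intro ε
      have : (x : ℂ) + ((((-1):ℝ):ℂ) * ε) * Complex.I = (x : ℂ) - ε * Complex.I := by
        push_cast; ring
      rw [this]
    have := hmm.congr heq
    have hval : (1 + ((((-1):ℝ)):ℂ) * (t:ℂ) * Complex.I) = 1 - (t:ℂ) * Complex.I := by
      push_cast; ring
    rwa [hval] at this
  refine ⟨_, _, hDp, hDm, ?_⟩
  -- product
  set up : ℂ := 1 + (t:ℂ) * Complex.I with hup_def
  set um : ℂ := 1 - (t:ℂ) * Complex.I with hum_def
  have hup_re : up.re = 1 := by simp [hup_def]
  have hum_re : um.re = 1 := by simp [hum_def]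
  have hup0 : up ≠ 0 := by intro h; rw [h] at hup_re; simp at hup_re
  have hum0 : um ≠ 0 := by intro h; rw [h] at hum_re; simp at hum_re
  have hargp := abs_lt.mp (abs_arg_lt_pi_div_two_iff.mpr (Or.inl (by rw [hup_re]; norm_num)))
  have hargm := abs_lt.mp (abs_arg_lt_pi_div_two_iff.mpr (Or.inl (by rw [hum_re]; norm_num)))
  have hpi := Real.pi_pos
  have hmul : up ^ (-(α:ℂ)) * um ^ (-(α:ℂ)) = (up * um) ^ (-(α:ℂ)) := by
    rw [Complex.cpow_def_of_ne_zero hup0 _, Complex.cpow_def_of_ne_zero hum0 _,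
      Complex.cpow_def_of_ne_zero (mul_ne_zero hup0 hum0) _,
      log_mul' hup0 hum0 (by linarith [hargp.1, hargm.1]) (by linarith [hargp.2, hargm.2]),
      ← Complex.exp_add]
    congr 1
    ring
  have ht2 : t^2 = 1/x - 1 := Real.sq_sqrt (by linarith)
  have hprod : up * um = ((1/x : ℝ) : ℂ) := by
    have h1 : up * um = 1 + ((t:ℝ):ℂ)^2 := by
      rw [hup_def, hum_def]
      linear_combination (-((t:ℂ))^2) * Complex.I_sq
    have h2 : (1:ℝ) + t^2 = 1/x := by rw [ht2]; ring
    rw [h1]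
    push_cast [← h2]
    ring
  have hofc : ((1/x : ℝ) : ℂ) ^ (-(α:ℂ)) = (x:ℂ) ^ (α:ℂ) := by
    have e1 : ((1/x)^(-α) : ℝ) = x ^ α := by
      rw [one_div, Real.inv_rpow hx0.le, Real.rpow_neg hx0.le, inv_inv]
    calc ((1/x : ℝ) : ℂ) ^ (-(α:ℂ)) = ((1/x : ℝ) : ℂ) ^ (((-α : ℝ)):ℂ) := by push_cast; ring_nf
      _ = (((1/x)^(-α) : ℝ) : ℂ) := (Complex.ofReal_cpow (by positivity) _).symm
      _ = ((x^α : ℝ) : ℂ) := by rw [e1]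
      _ = (x:ℂ) ^ ((α:ℝ):ℂ) := Complex.ofReal_cpow hx0.le α
  rw [hmul, hprod, hofc]


end SzegoAux

/-- the Szegő function `D` is holomorphic and non-vanishing on
`ℂ \ [0,1]`, its boundary values satisfy `D₊(x)D₋(x) = x^α` on `(0,1)`, and
`D(z) → 2^{-α}` as `z → ∞`. -/
theorem szego_function_properties (α : ℝ) (hα : -1 < α) :
    DifferentiableOn ℂ (szego α) unitSegmentᶜ ∧
    (∀ z ∈ unitSegmentᶜ, szego α z ≠ 0) ∧
    (∀ x : ℝ, x ∈ Set.Ioo (0:ℝ) 1 → ∃ Dp Dm : ℂ,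
      Tendsto (fun ε : ℝ => szego α ((x : ℂ) + ε * Complex.I))
        (nhdsWithin 0 (Set.Ioi 0)) (nhds Dp) ∧
      Tendsto (fun ε : ℝ => szego α ((x : ℂ) - ε * Complex.I))
        (nhdsWithin 0 (Set.Ioi 0)) (nhds Dm) ∧
      Dp * Dm = (x : ℂ) ^ (α : ℂ)) ∧
    Tendsto (szego α) (comap (fun z : ℂ => ‖z‖) atTop) (nhds ((2 : ℂ) ^ (-α : ℂ))) :=
  ⟨SzegoAux.part1 α, SzegoAux.part2 α, fun x hx => SzegoAux.part3 α x hx, SzegoAux.part4 α⟩
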